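/- arXiv:2406.14950 — 2 statements merged into one kernel-verified Lean document; each statement's English description precedes it below -/
import Mathlib

section
/- Let n ≥ 1, Q = [0,1)ⁿ, ξ ∈ ℝⁿ, and 0 < t < l. There is a constant C(n) > 0, depending only on n, such that for every u ∈ L¹(lQ + ξ) one has ∫_{lQ+ξ} |u(y) − l^{−n} ∫_{lQ+ξ} u(x) dx| dy ≤ C(n) · l · ∫_{lQ+ξ} ∫_{lQ+ξ} |u(x) − u(y)| / (|x−y|² + t²)^{(n+1)/2} dx dy. -/
open MeasureTheory Filter Set

/-- The half-open cube `lQ + ξ` with `Q = [0,1)ⁿ`. -/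
def cube (n : ℕ) (l : ℝ) (ξ : EuclideanSpace ℝ (Fin n)) : Set (EuclideanSpace ℝ (Fin n)) :=
  {x | ∀ i, x i ∈ Set.Ico (ξ i) (ξ i + l)}

private lemma integ_comp_fst {α : Type*} [MeasurableSpace α] {μ ν : Measure α}
    [IsFiniteMeasure ν] [SFinite μ] {u : α → ℝ} (hu : Integrable u μ) :
    Integrable (fun p : α × α => u p.1) (μ.prod ν) := by
  have hm : AEStronglyMeasurable u ((μ.prod ν).map Prod.fst) := by
    rw [Measure.map_fst_prod]
    exact hu.aestronglyMeasurable.smul_measure _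
  have h1 : Integrable u ((μ.prod ν).map Prod.fst) := by
    rw [Measure.map_fst_prod]
    exact hu.smul_measure (measure_ne_top ν univ)
  exact (integrable_map_measure hm measurable_fst.aemeasurable).mp h1

private lemma integ_comp_snd {α : Type*} [MeasurableSpace α] {μ ν : Measure α}
    [IsFiniteMeasure μ] [SFinite ν] {u : α → ℝ} (hu : Integrable u ν) :
    Integrable (fun p : α × α => u p.2) (μ.prod ν) := by
  have hm : AEStronglyMeasurable u ((μ.prod ν).map Prod.snd) := by
    rw [Measure.map_snd_prod]
    exact hu.aestronglyMeasurable.smul_measure _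
  have h1 : Integrable u ((μ.prod ν).map Prod.snd) := by
    rw [Measure.map_snd_prod]
    exact hu.smul_measure (measure_ne_top μ univ)
  exact (integrable_map_measure hm measurable_snd.aemeasurable).mp h1

private lemma cube_eq_preimage (n : ℕ) (l : ℝ) (ξ : EuclideanSpace ℝ (Fin n)) :
    cube n l ξ = (MeasurableEquiv.toLp 2 (Fin n → ℝ)).symm ⁻¹'
      (Set.univ.pi fun i => Set.Ico (ξ i) (ξ i + l)) := by
  ext x
  simp [cube, Set.mem_pi, MeasurableEquiv.toLp]
  exact Iff.rfl

private lemma cube_measurable (n : ℕ) (l : ℝ) (ξ : EuclideanSpace ℝ (Fin n)) :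
    MeasurableSet (cube n l ξ) := by
  rw [cube_eq_preimage]
  exact (MeasurableSet.univ_pi fun i => measurableSet_Ico).preimage
    (MeasurableEquiv.toLp 2 (Fin n → ℝ)).symm.measurable

private lemma volume_cube (n : ℕ) (l : ℝ) (hl : 0 ≤ l) (ξ : EuclideanSpace ℝ (Fin n)) :
    volume (cube n l ξ) = ENNReal.ofReal (l ^ n) := by
  rw [cube_eq_preimage]
  rw [(EuclideanSpace.volume_preserving_symm_measurableEquiv_toLp (Fin n)).measure_preimage
    ((MeasurableSet.univ_pi fun i => measurableSet_Ico).nullMeasurableSet)]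
  rw [volume_pi_pi]
  simp [Real.volume_Ico, ← ENNReal.ofReal_pow hl]

private lemma norm_sub_sq_le {n : ℕ} {l : ℝ} {ξ x y : EuclideanSpace ℝ (Fin n)}
    (hx : x ∈ cube n l ξ) (hy : y ∈ cube n l ξ) : ‖x - y‖ ^ 2 ≤ n * l ^ 2 := by
  have h : ∀ i, ‖(x - y) i‖ ^ 2 ≤ l ^ 2 := by
    intro i
    have hxi := hx i
    have hyi := hy i
    simp only [Set.mem_Ico] at hxi hyi
    have : (x - y) i = x i - y i := rfl
    rw [this, Real.norm_eq_abs, sq_abs]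
    nlinarith [hxi.1, hxi.2, hyi.1, hyi.2]
  have hnorm : ‖x - y‖ ^ 2 = ∑ i, ‖(x - y) i‖ ^ 2 := by
    rw [EuclideanSpace.norm_eq]
    rw [Real.sq_sqrt (Finset.sum_nonneg fun i _ => sq_nonneg _)]
  rw [hnorm]
  calc ∑ i, ‖(x - y) i‖ ^ 2 ≤ ∑ _i : Fin n, l ^ 2 :=
        Finset.sum_le_sum fun i _ => h i
    _ = n * l ^ 2 := by simp [Finset.sum_const, nsmul_eq_mul]

theorem stmt_3 (n : ℕ) (hn : 1 ≤ n) :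
    ∃ C : ℝ, 0 < C ∧
      ∀ (ξ : EuclideanSpace ℝ (Fin n)) (t l : ℝ), 0 < t → t < l →
        ∀ u : EuclideanSpace ℝ (Fin n) → ℝ, IntegrableOn u (cube n l ξ) →
          (∫ y in cube n l ξ, |u y - (l ^ n)⁻¹ * ∫ x in cube n l ξ, u x|) ≤
            C * l * ∫ x in cube n l ξ, ∫ y in cube n l ξ,
              |u x - u y| / (‖x - y‖ ^ 2 + t ^ 2) ^ (((n : ℝ) + 1) / 2) := by
  set e : ℝ := ((n : ℝ) + 1) / 2 with he
  refine ⟨((n : ℝ) + 1) ^ e, Real.rpow_pos_of_pos (by positivity) _, ?_⟩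
  set C : ℝ := ((n : ℝ) + 1) ^ e with hCdef
  have hC : 0 < C := Real.rpow_pos_of_pos (by positivity) _
  intro ξ t l ht htl u hu
  have hl : 0 < l := ht.trans htl
  have he0 : 0 ≤ e := by positivity
  set S := cube n l ξ with hSdef
  have hSm : MeasurableSet S := cube_measurable n l ξ
  have hvol : volume S = ENNReal.ofReal (l ^ n) := volume_cube n l hl.le ξ
  have hfin : IsFiniteMeasure (volume.restrict S) := by
    constructor
    rw [Measure.restrict_apply_univ, hvol]
    exact ENNReal.ofReal_lt_top
  haveI := hfin
  have hln : (0:ℝ) < l ^ n := by positivity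
  have hvolR : (volume S).toReal = l ^ n := by
    rw [hvol, ENNReal.toReal_ofReal hln.le]
  -- denominator bounds
  have hKpos : 0 < C * l ^ (n + 1) := by positivity
  have hDpos : ∀ x y : EuclideanSpace ℝ (Fin n),
      0 < (‖x - y‖ ^ 2 + t ^ 2) ^ e := fun x y =>
    Real.rpow_pos_of_pos (by positivity) _
  have hl2e : (l ^ 2 : ℝ) ^ e = l ^ (n + 1) := by
    rw [← Real.rpow_natCast l 2, ← Real.rpow_mul hl.le, ← Real.rpow_natCast l (n + 1)]
    congr 1
    push_cast
    ring
  have hD_le : ∀ x ∈ S, ∀ y ∈ S,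
      (‖x - y‖ ^ 2 + t ^ 2) ^ e ≤ C * l ^ (n + 1) := by
    intro x hx y hy
    have h1 : ‖x - y‖ ^ 2 ≤ n * l ^ 2 := norm_sub_sq_le hx hy
    have h2 : t ^ 2 ≤ l ^ 2 := by nlinarith
    calc (‖x - y‖ ^ 2 + t ^ 2) ^ e ≤ (((n : ℝ) + 1) * l ^ 2) ^ e :=
          Real.rpow_le_rpow (by positivity) (by nlinarith) he0
      _ = C * (l ^ 2) ^ e := Real.mul_rpow (by positivity) (by positivity)
      _ = C * l ^ (n + 1) := by rw [hl2e]
  have hD_inv_le : ∀ x y : EuclideanSpace ℝ (Fin n),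
      ((‖x - y‖ ^ 2 + t ^ 2) ^ e)⁻¹ ≤ ((t ^ 2) ^ e)⁻¹ := by
    intro x y
    refine inv_anti₀ (Real.rpow_pos_of_pos (by positivity) _) ?_
    exact Real.rpow_le_rpow (by positivity) (by nlinarith [sq_nonneg ‖x - y‖]) he0
  -- G a = ∫ b in S, |u a - u b|
  set G : EuclideanSpace ℝ (Fin n) → ℝ := fun a => ∫ b in S, |u a - u b| with hGdef
  have hG_nonneg : ∀ a, 0 ≤ G a := fun a => integral_nonneg fun b => abs_nonneg _
  -- product integrability of |u x - u y|
  have hprod : Integrable (fun p : EuclideanSpace ℝ (Fin n) × EuclideanSpace ℝ (Fin n) =>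
      |u p.1 - u p.2|) ((volume.restrict S).prod (volume.restrict S)) :=
    ((integ_comp_fst hu).sub (integ_comp_snd hu)).abs
  have hG_int : Integrable G (volume.restrict S) := hprod.integral_prod_left
  -- product integrability of the kernel
  have hDcont : Continuous (fun p : EuclideanSpace ℝ (Fin n) × EuclideanSpace ℝ (Fin n) =>
      (((‖p.1 - p.2‖ ^ 2 + t ^ 2) ^ e)⁻¹ : ℝ)) := by
    refine Continuous.inv₀ ?_ fun p => ne_of_gt (hDpos _ _)
    exact (((continuous_fst.sub continuous_snd).norm.pow 2).add continuous_const).rpow_const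
      fun p => Or.inr he0
  have hfprod : Integrable (fun p : EuclideanSpace ℝ (Fin n) × EuclideanSpace ℝ (Fin n) =>
      |u p.1 - u p.2| / (‖p.1 - p.2‖ ^ 2 + t ^ 2) ^ e)
      ((volume.restrict S).prod (volume.restrict S)) := by
    have := hprod.bdd_mul (c := ((t ^ 2) ^ e)⁻¹) hDcont.aestronglyMeasurable
      (Eventually.of_forall fun p => by
        rw [Real.norm_eq_abs, abs_of_pos (inv_pos.mpr (hDpos _ _))]
        exact hD_inv_le _ _)
    simpa [div_eq_mul_inv, mul_comm] using this
  have hinner_int : Integrable (fun x => ∫ y in S,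
      |u x - u y| / (‖x - y‖ ^ 2 + t ^ 2) ^ e) (volume.restrict S) :=
    hfprod.integral_prod_left
  -- Step 1: pointwise bound on |u y - avg|
  have havg : ∀ y, |u y - (l ^ n)⁻¹ * ∫ x in S, u x| ≤ (l ^ n)⁻¹ * G y := by
    intro y
    have hsub : ∫ x in S, (u y - u x) = l ^ n * u y - ∫ x in S, u x := by
      rw [integral_sub (integrable_const _) hu, setIntegral_const, measureReal_def, hvolR, smul_eq_mul]
    have heq : u y - (l ^ n)⁻¹ * ∫ x in S, u x
        = (l ^ n)⁻¹ * ∫ x in S, (u y - u x) := by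
      rw [hsub]; field_simp
    rw [heq, abs_mul, abs_of_pos (inv_pos.mpr hln)]
    gcongr
    calc |∫ x in S, (u y - u x)| ≤ ∫ x in S, |u y - u x| := by
          simpa [Real.norm_eq_abs] using
            norm_integral_le_integral_norm (μ := volume.restrict S) (fun x => u y - u x)
      _ = G y := by simp only [hGdef, abs_sub_comm (u y)]
  -- Step 2: LHS ≤ (l^n)⁻¹ * ∫ G
  have hstep1 : (∫ y in S, |u y - (l ^ n)⁻¹ * ∫ x in S, u x|)
      ≤ (l ^ n)⁻¹ * ∫ y in S, G y := by
    calc (∫ y in S, |u y - (l ^ n)⁻¹ * ∫ x in S, u x|)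
        ≤ ∫ y in S, (l ^ n)⁻¹ * G y :=
          integral_mono_of_nonneg (Eventually.of_forall fun y => abs_nonneg _)
            (hG_int.const_mul _) (Eventually.of_forall fun y => havg y)
      _ = (l ^ n)⁻¹ * ∫ y in S, G y := integral_const_mul _ _
  -- Step 3: (C * l^(n+1))⁻¹ * ∫ G ≤ RHS integral
  have hstep2 : (C * l ^ (n + 1))⁻¹ * ∫ x in S, G x
      ≤ ∫ x in S, ∫ y in S, |u x - u y| / (‖x - y‖ ^ 2 + t ^ 2) ^ e := by
    rw [← integral_const_mul _ _]
    refine integral_mono_of_nonneg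
      (Eventually.of_forall fun x => mul_nonneg (inv_pos.mpr hKpos).le (hG_nonneg x))
      hinner_int ?_
    filter_upwards [ae_restrict_mem hSm] with x hx
    have hDcont' : Continuous (fun y : EuclideanSpace ℝ (Fin n) =>
        (((‖x - y‖ ^ 2 + t ^ 2) ^ e)⁻¹ : ℝ)) := by
      refine Continuous.inv₀ ?_ fun y => ne_of_gt (hDpos _ _)
      exact (((continuous_const.sub continuous_id).norm.pow 2).add continuous_const).rpow_const
        fun y => Or.inr he0
    have habs_int : Integrable (fun y => |u x - u y|) (volume.restrict S) :=
      ((integrable_const (u x)).sub hu).abs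
    have hf_int : Integrable (fun y => |u x - u y| / (‖x - y‖ ^ 2 + t ^ 2) ^ e)
        (volume.restrict S) := by
      have := habs_int.bdd_mul (c := ((t ^ 2) ^ e)⁻¹) hDcont'.aestronglyMeasurable
        (Eventually.of_forall fun y => by
          rw [Real.norm_eq_abs, abs_of_pos (inv_pos.mpr (hDpos _ _))]
          exact hD_inv_le _ _)
      simpa [div_eq_mul_inv, mul_comm] using this
    calc (C * l ^ (n + 1))⁻¹ * G x
        = ∫ y in S, (C * l ^ (n + 1))⁻¹ * |u x - u y| := by
          rw [integral_const_mul _ _]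
      _ ≤ ∫ y in S, |u x - u y| / (‖x - y‖ ^ 2 + t ^ 2) ^ e := by
          refine setIntegral_mono_on (habs_int.const_mul _) hf_int hSm fun y hy => ?_
          rw [inv_mul_eq_div]
          exact div_le_div_of_nonneg_left (abs_nonneg _) (hDpos x y) (hD_le x hx y hy)
  -- conclude
  have hfinal : C * l * ((C * l ^ (n + 1))⁻¹ * ∫ x in S, G x)
      = (l ^ n)⁻¹ * ∫ x in S, G x := by
    have : C * l * (C * l ^ (n + 1))⁻¹ = (l ^ n)⁻¹ := by
      rw [pow_succ]
      field_simp
    rw [← mul_assoc, this]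
  calc (∫ y in S, |u y - (l ^ n)⁻¹ * ∫ x in S, u x|)
      ≤ (l ^ n)⁻¹ * ∫ y in S, G y := hstep1
    _ = C * l * ((C * l ^ (n + 1))⁻¹ * ∫ x in S, G x) := by rw [hfinal]
    _ ≤ C * l * ∫ x in S, ∫ y in S, |u x - u y| / (‖x - y‖ ^ 2 + t ^ 2) ^ e := by
        have := mul_le_mul_of_nonneg_left hstep2 (by positivity : (0:ℝ) ≤ C * l)
        linarith
end

section
/- Let n ≥ 1 and let ρ : ℝⁿ → [0, ∞) be a bounded function supported in the unit ball B(0,1); for ε > 0 set ρ_ε(z) = ε^{−n} ρ(z/ε). Then there is a constant C > 0, depending only on n and ‖ρ‖_∞, such that for every t ∈ (0,1) and every I ∈ ℕ with 2^{−I−1} ≤ t ≤ 2^{−I}, one has Σ_{i=0}^{I} 2^{i} ρ_{2^{−i}}(z) ≤ C / (|z|² + t²)^{(n+1)/2} for every z ∈ ℝⁿ. -/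
open MeasureTheory Filter Set

/-- The rescaling `ρ_ε(z) = ε^{-n} ρ(z/ε)` of a mollifier. -/
noncomputable def rescale (n : ℕ) (ρ : EuclideanSpace ℝ (Fin n) → ℝ) (ε : ℝ)
    (z : EuclideanSpace ℝ (Fin n)) : ℝ :=
  (ε ^ n)⁻¹ * ρ (ε⁻¹ • z)

lemma geom_aux (m : ℝ) (hm : 0 ≤ m) :
    ∀ N : ℕ, ∑ i ∈ Finset.range N, (if m * 2 ^ i ≤ 1 then m * (2 : ℝ) ^ i else 0) ≤ 2 := by
  intro N
  induction N with
  | zero => simp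
  | succ N ih =>
    by_cases h : m * (2 : ℝ) ^ N ≤ 1
    · have hall : ∀ i ∈ Finset.range (N + 1),
          (if m * (2 : ℝ) ^ i ≤ 1 then m * (2 : ℝ) ^ i else 0) = m * 2 ^ i := by
        intro i hi
        have hi' : i ≤ N := Nat.lt_succ_iff.mp (Finset.mem_range.mp hi)
        rw [if_pos]
        calc m * (2 : ℝ) ^ i ≤ m * 2 ^ N := by
              have := pow_le_pow_right₀ (a := (2:ℝ)) one_le_two hi'
              nlinarith
          _ ≤ 1 := h
      rw [Finset.sum_congr rfl hall, ← Finset.mul_sum]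
      have hgs : ∑ i ∈ Finset.range (N + 1), (2 : ℝ) ^ i = 2 ^ (N + 1) - 1 := by
        have := geom_sum_eq (by norm_num : (2 : ℝ) ≠ 1) (N + 1)
        rw [this]; norm_num
      rw [hgs, pow_succ]
      nlinarith
    · rw [Finset.sum_range_succ, if_neg h, add_zero]; exact ih

theorem stmt_6 (n : ℕ) (hn : 1 ≤ n) (B : ℝ) :
    ∃ C > (0 : ℝ), ∀ ρ : EuclideanSpace ℝ (Fin n) → ℝ,
      (∀ z, 0 ≤ ρ z) → (∀ z, ρ z ≤ B) →
      (∀ z, z ∉ Metric.ball (0 : EuclideanSpace ℝ (Fin n)) 1 → ρ z = 0) →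
      ∀ t ∈ Set.Ioo (0 : ℝ) 1, ∀ I : ℕ,
        (2 : ℝ) ^ (-(I : ℝ) - 1) ≤ t → t ≤ (2 : ℝ) ^ (-(I : ℝ)) →
        ∀ z : EuclideanSpace ℝ (Fin n),
          ∑ i ∈ Finset.range (I + 1), (2 : ℝ) ^ i * rescale n ρ ((2 : ℝ) ^ (-(i : ℝ))) z ≤
            C / (‖z‖ ^ 2 + t ^ 2) ^ (((n : ℝ) + 1) / 2) := by
  refine ⟨(2 * max B 0 + 1) * 2 ^ (n + 1), by positivity, ?_⟩
  intro ρ hρ0 hρB hsupp t ht I htlo hthi z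
  set B₀ : ℝ := max B 0 with hB₀def
  have hB₀ : 0 ≤ B₀ := le_max_right _ _
  have ht0 : 0 < t := ht.1
  set m : ℝ := max ‖z‖ t with hmdef
  have hm0 : 0 < m := lt_of_lt_of_le ht0 (le_max_right _ _)
  have hmn : (0 : ℝ) < m ^ (n + 1) := pow_pos hm0 _
  -- the term-by-term bound
  have term_le : ∀ i ∈ Finset.range (I + 1),
      (2 : ℝ) ^ i * rescale n ρ ((2 : ℝ) ^ (-(i : ℝ))) z ≤
        (B₀ / m ^ (n + 1)) * (if m * 2 ^ i ≤ 1 then m * (2 : ℝ) ^ i else 0) := by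
    intro i hi
    have hiI : i ≤ I := Nat.lt_succ_iff.mp (Finset.mem_range.mp hi)
    have hε : (2 : ℝ) ^ (-(i : ℝ)) = ((2 : ℝ) ^ i)⁻¹ := by
      rw [← Real.rpow_natCast 2 i, ← Real.rpow_neg (by norm_num)]
    unfold rescale
    rw [hε, inv_inv, inv_pow, inv_inv]
    by_cases hz : ((2 : ℝ) ^ i) • z ∈ Metric.ball (0 : EuclideanSpace ℝ (Fin n)) 1
    · have h2ipos : (0 : ℝ) < 2 ^ i := by positivity
      have h1 : ‖z‖ * 2 ^ i < 1 := by
        have hb := mem_ball_zero_iff.mp hz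
        rw [norm_smul, Real.norm_eq_abs, abs_of_pos h2ipos] at hb
        linarith [hb, mul_comm ((2:ℝ)^i) ‖z‖]
      have h2 : t * 2 ^ i ≤ 1 := by
        have h2i : (2 : ℝ) ^ i ≤ 2 ^ I := pow_le_pow_right₀ one_le_two hiI
        have htI : t ≤ ((2 : ℝ) ^ I)⁻¹ := by
          rw [← Real.rpow_natCast 2 I, ← Real.rpow_neg (by norm_num)]
          exact hthi
        have hI : t * 2 ^ I ≤ 1 := by
          calc t * 2 ^ I ≤ ((2 : ℝ) ^ I)⁻¹ * 2 ^ I := by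
                apply mul_le_mul_of_nonneg_right htI (by positivity)
            _ = 1 := inv_mul_cancel₀ (by positivity)
        calc t * 2 ^ i ≤ t * 2 ^ I := by
              apply mul_le_mul_of_nonneg_left h2i ht0.le
          _ ≤ 1 := hI
      have hmz : m * 2 ^ i ≤ 1 := by
        rw [hmdef]
        rcases le_total ‖z‖ t with h | h
        · rw [max_eq_right h]; exact h2
        · rw [max_eq_left h]; exact h1.le
      rw [if_pos hmz]
      have hinv : (2 : ℝ) ^ i ≤ m⁻¹ := by
        rw [← one_div, le_div_iff₀ hm0]
        linarith [hmz, mul_comm m ((2:ℝ)^i)]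
      have hρle : ρ ((2 : ℝ) ^ i • z) ≤ B₀ := le_trans (hρB _) (le_max_left _ _)
      calc (2 : ℝ) ^ i * (((2 : ℝ) ^ i) ^ n * ρ ((2 : ℝ) ^ i • z))
          ≤ (2 : ℝ) ^ i * ((m⁻¹) ^ n * B₀) := by
            apply mul_le_mul_of_nonneg_left _ h2ipos.le
            apply mul_le_mul (pow_le_pow_left₀ h2ipos.le hinv n) hρle (hρ0 _) (by positivity)
        _ = (B₀ / m ^ (n + 1)) * (m * 2 ^ i) := by
            field_simp
            linear_combination (B₀ * m) * (mul_inv_cancel₀ (pow_ne_zero n hm0.ne'))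
    · rw [hsupp _ hz, mul_zero, mul_zero]
      apply mul_nonneg (div_nonneg hB₀ hmn.le)
      split
      · positivity
      · exact le_rfl
  have hD : (0 : ℝ) < (‖z‖ ^ 2 + t ^ 2) ^ (((n : ℝ) + 1) / 2) :=
    Real.rpow_pos_of_pos (by positivity) _
  have hsum : ∑ i ∈ Finset.range (I + 1), (2 : ℝ) ^ i * rescale n ρ ((2 : ℝ) ^ (-(i : ℝ))) z ≤
      (2 * B₀) / m ^ (n + 1) := by
    calc ∑ i ∈ Finset.range (I + 1), (2 : ℝ) ^ i * rescale n ρ ((2 : ℝ) ^ (-(i : ℝ))) z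
        ≤ ∑ i ∈ Finset.range (I + 1),
            (B₀ / m ^ (n + 1)) * (if m * 2 ^ i ≤ 1 then m * (2 : ℝ) ^ i else 0) :=
          Finset.sum_le_sum term_le
      _ = (B₀ / m ^ (n + 1)) *
            ∑ i ∈ Finset.range (I + 1), (if m * 2 ^ i ≤ 1 then m * (2 : ℝ) ^ i else 0) := by
          rw [Finset.mul_sum]
      _ ≤ (B₀ / m ^ (n + 1)) * 2 := by
          apply mul_le_mul_of_nonneg_left (geom_aux m hm0.le (I + 1))
          exact div_nonneg hB₀ hmn.le
      _ = (2 * B₀) / m ^ (n + 1) := by ring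
  refine hsum.trans ?_
  rw [div_le_div_iff₀ hmn hD]
  -- bound the rpow term
  have e0 : (0 : ℝ) ≤ ((n : ℝ) + 1) / 2 := by positivity
  have h1 : ‖z‖ ^ 2 + t ^ 2 ≤ 2 * m ^ 2 := by
    have hz' : ‖z‖ ≤ m := le_max_left _ _
    have ht' : t ≤ m := le_max_right _ _
    nlinarith [norm_nonneg z, ht0.le]
  have h2 : (‖z‖ ^ 2 + t ^ 2) ^ (((n : ℝ) + 1) / 2) ≤ (2 * m ^ 2) ^ (((n : ℝ) + 1) / 2) :=
    Real.rpow_le_rpow (by positivity) h1 e0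
  have h3 : (2 * m ^ 2 : ℝ) ^ (((n : ℝ) + 1) / 2) =
      (2 : ℝ) ^ (((n : ℝ) + 1) / 2) * (m ^ 2 : ℝ) ^ (((n : ℝ) + 1) / 2) :=
    Real.mul_rpow (by norm_num) (sq_nonneg m)
  have h4 : ((m ^ 2 : ℝ)) ^ (((n : ℝ) + 1) / 2) = m ^ (n + 1) := by
    rw [← Real.rpow_natCast m 2, ← Real.rpow_mul hm0.le, ← Real.rpow_natCast m (n + 1)]
    norm_num
    ring_nf
  have h5 : (2 : ℝ) ^ (((n : ℝ) + 1) / 2) ≤ 2 ^ (n + 1) := by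
    rw [← Real.rpow_natCast 2 (n + 1)]
    apply Real.rpow_le_rpow_of_exponent_le one_le_two
    push_cast
    have : (0 : ℝ) ≤ (n : ℝ) := Nat.cast_nonneg n
    linarith
  calc 2 * B₀ * (‖z‖ ^ 2 + t ^ 2) ^ (((n : ℝ) + 1) / 2)
      ≤ 2 * B₀ * ((2 : ℝ) ^ (((n : ℝ) + 1) / 2) * m ^ (n + 1)) := by
        apply mul_le_mul_of_nonneg_left _ (by positivity)
        rw [← h4, ← h3]; exact h2
    _ ≤ 2 * B₀ * ((2 : ℝ) ^ (n + 1) * m ^ (n + 1)) := by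
        apply mul_le_mul_of_nonneg_left _ (by positivity)
        apply mul_le_mul_of_nonneg_right h5 hmn.le
    _ ≤ (2 * B₀ + 1) * 2 ^ (n + 1) * m ^ (n + 1) := by nlinarith [hmn, pow_pos (by norm_num : (0:ℝ)<2) (n+1)]
end
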